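/- arXiv:2402.01621 — 6 statements merged into one kernel-verified Lean document; each statement's English description precedes it below -/
import Mathlib

section
/- Let d ≥ 1, let f : ℝ^d → ℝ be differentiable and L-gradient Lipschitz with L > 0, let x ∈ ℝ^d, let α ≥ 0, and let s be a Rademacher random vector in ℝ^d. Then E[min(f(x + αs), f(x − αs))] ≤ f(x) − (α/√2)‖∇f(x)‖ + (L α² d)/2. -/
/-- The vector in `ℝ^d` with `+1` in coordinates where `e` is `true`
and `-1` where `e` is `false`; a Rademacher random vector is uniform over these. -/
noncomputable def signVec {d : ℕ} (e : Fin d → Bool) : EuclideanSpace ℝ (Fin d) :=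
  WithLp.toLp 2 (fun i => if e i then 1 else -1)

open Finset

variable {d : ℕ}


noncomputable def sgn (b : Bool) : ℝ := if b then 1 else -1

lemma sgn_mul_self (b : Bool) : sgn b * sgn b = 1 := by cases b <;> simp [sgn]

lemma sgn_not (b : Bool) : sgn (!b) = - sgn b := by cases b <;> simp [sgn]

noncomputable def chi (A : Finset (Fin d)) (e : Fin d → Bool) : ℝ := ∏ i ∈ A, sgn (e i)

lemma chi_empty (e : Fin d → Bool) : chi (∅ : Finset (Fin d)) e = 1 := by simp [chi]

lemma chi_singleton (i : Fin d) (e : Fin d → Bool) : chi {i} e = sgn (e i) := by simp [chi]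

/-- primal orthogonality -/
lemma sum_chi_mul_chi (A B : Finset (Fin d)) :
    ∑ e : Fin d → Bool, chi A e * chi B e = if A = B then (2:ℝ)^d else 0 := by
  have hrw : ∀ e : Fin d → Bool, chi A e * chi B e
      = ∏ i : Fin d, ((if i ∈ A then sgn (e i) else 1) * (if i ∈ B then sgn (e i) else 1)) := by
    intro e
    rw [prod_mul_distrib]
    congr 1
    · rw [prod_ite_mem univ A (fun i => sgn (e i)), univ_inter]; rfl
    · rw [prod_ite_mem univ B (fun i => sgn (e i)), univ_inter]; rfl
  simp only [hrw]
  rw [show (∑ e : Fin d → Bool, ∏ i : Fin d,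
      ((if i ∈ A then sgn (e i) else 1) * (if i ∈ B then sgn (e i) else 1)))
      = ∏ i : Fin d, ∑ b : Bool, ((if i ∈ A then sgn b else 1) * (if i ∈ B then sgn b else 1)) by
    rw [Finset.prod_univ_sum]
    rw [Fintype.piFinset_univ]]
  by_cases hAB : A = B
  · subst hAB
    rw [if_pos rfl]
    have : ∀ i : Fin d, (∑ b : Bool, ((if i ∈ A then sgn b else 1) * (if i ∈ A then sgn b else 1))) = 2 := by
      intro i
      by_cases hi : i ∈ A <;> simp [hi, sgn] <;> norm_num
    calc ∏ i : Fin d, (∑ b : Bool, ((if i ∈ A then sgn b else 1) * (if i ∈ A then sgn b else 1)))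
        = ∏ _i : Fin d, (2:ℝ) := by exact prod_congr rfl (fun i _ => this i)
      _ = 2^d := by simp
  · rw [if_neg hAB]
    have : ∃ i : Fin d, (i ∈ A) ≠ (i ∈ B) := by
      by_contra hcon
      push_neg at hcon
      exact hAB (Finset.ext fun i => by
        have := hcon i
        constructor <;> intro h
        · by_contra hB; simp [h, hB] at this
        · by_contra hA; simp [h, hA] at this)
    obtain ⟨i, hi⟩ := this
    apply prod_eq_zero (mem_univ i)
    rcases Decidable.em (i ∈ A) with hA | hA <;> rcases Decidable.em (i ∈ B) with hB | hB
    · exact absurd (by simp [hA, hB]) hi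
    · simp [hA, hB, sgn]
    · simp [hA, hB, sgn]
    · exact absurd (by simp [hA, hB]) hi

/-- dual orthogonality -/
lemma sum_chi_chi (e e' : Fin d → Bool) :
    ∑ A : Finset (Fin d), chi A e * chi A e' = if e = e' then (2:ℝ)^d else 0 := by
  have hrw : ∀ A : Finset (Fin d), chi A e * chi A e'
      = (∏ i ∈ A, (sgn (e i) * sgn (e' i))) * ∏ i ∈ (univ : Finset (Fin d)) \ A, (1:ℝ) := by
    intro A
    rw [prod_mul_distrib]
    simp [chi]
  simp only [hrw]
  rw [show (∑ A : Finset (Fin d), (∏ i ∈ A, (sgn (e i) * sgn (e' i))) * ∏ i ∈ (univ : Finset (Fin d)) \ A, (1:ℝ))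
      = ∑ A ∈ (univ : Finset (Fin d)).powerset, (∏ i ∈ A, (sgn (e i) * sgn (e' i))) * ∏ i ∈ (univ : Finset (Fin d)) \ A, (1:ℝ) by
    rw [Finset.powerset_univ]]
  rw [← Finset.prod_add]
  by_cases hee : e = e'
  · subst hee
    have : ∀ i : Fin d, sgn (e i) * sgn (e i) + 1 = 2 := fun i => by rw [sgn_mul_self]; norm_num
    rw [if_pos rfl]
    calc ∏ i : Fin d, (sgn (e i) * sgn (e i) + 1) = ∏ _i : Fin d, (2:ℝ) :=
          prod_congr rfl (fun i _ => this i)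
      _ = 2^d := by simp
  · rw [if_neg hee]
    have : ∃ i, e i ≠ e' i := by
      by_contra hcon; push_neg at hcon; exact hee (funext hcon)
    obtain ⟨i, hi⟩ := this
    apply prod_eq_zero (mem_univ i)
    cases hb : e i <;> cases hb' : e' i <;> simp_all [sgn]

noncomputable def Shat (r : (Fin d → Bool) → ℝ) (A : Finset (Fin d)) : ℝ :=
  ∑ e : Fin d → Bool, r e * chi A e

lemma Shat_empty (r : (Fin d → Bool) → ℝ) : Shat r ∅ = ∑ e : Fin d → Bool, r e := by
  simp [Shat, chi_empty]

/-- Parseval (unnormalized) -/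
lemma parseval (r g : (Fin d → Bool) → ℝ) :
    ∑ A : Finset (Fin d), Shat r A * Shat g A = 2^d * ∑ e : Fin d → Bool, r e * g e := by
  simp only [Shat, Finset.sum_mul_sum]
  rw [Finset.sum_comm]
  have : ∀ e : Fin d → Bool, ∑ A : Finset (Fin d), ∑ e' : Fin d → Bool,
      (r e * chi A e) * (g e' * chi A e') = 2^d * (r e * g e) := by
    intro e
    rw [Finset.sum_comm]
    have inner_eq : ∀ e' : Fin d → Bool, ∑ A : Finset (Fin d), (r e * chi A e) * (g e' * chi A e')
        = (r e * g e') * (if e = e' then (2:ℝ)^d else 0) := by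
      intro e'
      rw [← sum_chi_chi e e', Finset.mul_sum]
      exact sum_congr rfl fun A _ => by ring
    simp only [inner_eq]
    rw [Finset.sum_eq_single e]
    · rw [if_pos rfl]; ring
    · intro b _ hb; rw [if_neg (Ne.symm hb), mul_zero]
    · intro hb; exact absurd (mem_univ e) hb
  rw [Finset.mul_sum]
  exact sum_congr rfl fun e _ => this e

noncomputable def flp (i : Fin d) (e : Fin d → Bool) : Fin d → Bool :=
  Function.update e i (!(e i))

lemma flp_apply (i j : Fin d) (e : Fin d → Bool) :
    flp i e j = if j = i then !e j else e j := by
  by_cases h : j = i <;> simp [flp, Function.update, h]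

lemma flp_involutive (i : Fin d) : Function.Involutive (flp i) := by
  intro e; funext j
  by_cases h : j = i <;> simp [flp_apply, h]

lemma sum_flp (i : Fin d) (F : (Fin d → Bool) → ℝ) :
    ∑ e : Fin d → Bool, F (flp i e) = ∑ e : Fin d → Bool, F e :=
  Fintype.sum_equiv (Function.Involutive.toPerm _ (flp_involutive i)) _ _ (fun e => rfl)

lemma chi_flp (A : Finset (Fin d)) (i : Fin d) (e : Fin d → Bool) :
    chi A (flp i e) = (if i ∈ A then -1 else 1) * chi A e := by
  by_cases hi : i ∈ A
  · rw [if_pos hi, chi, chi, ← Finset.mul_prod_erase A _ hi, ← Finset.mul_prod_erase A (fun j => sgn (e j)) hi]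
    have h1 : sgn (flp i e i) = - sgn (e i) := by
      rw [flp_apply, if_pos rfl, sgn_not]
    have h2 : ∏ j ∈ A.erase i, sgn (flp i e j) = ∏ j ∈ A.erase i, sgn (e j) := by
      apply prod_congr rfl
      intro j hj
      rw [flp_apply, if_neg (Finset.ne_of_mem_erase hj)]
    rw [h1, h2]; ring
  · rw [if_neg hi, one_mul, chi, chi]
    apply prod_congr rfl
    intro j hj
    rw [flp_apply, if_neg]
    rintro rfl; exact hi hj

lemma Shat_flp (r : (Fin d → Bool) → ℝ) (i : Fin d) (A : Finset (Fin d)) :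
    Shat (fun e => r (flp i e)) A = (if i ∈ A then -1 else 1) * Shat r A := by
  have h0 : Shat (fun e => r (flp i e)) A = ∑ e : Fin d → Bool, r (flp i e) * chi A e := rfl
  rw [h0, ← sum_flp i (fun e => r (flp i e) * chi A e), Shat, Finset.mul_sum]
  apply sum_congr rfl
  intro e _
  rw [flp_involutive i e, chi_flp]
  ring

lemma Shat_even_singleton (r : (Fin d → Bool) → ℝ)
    (heven : ∀ e : Fin d → Bool, r (fun j => !(e j)) = r e) (i : Fin d) :
    Shat r {i} = 0 := by
  have hinv : Function.Involutive (fun e : Fin d → Bool => fun j => !(e j)) := by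
    intro e; funext j; simp
  set σ := Function.Involutive.toPerm _ hinv with hσ
  have hre : ∑ e : Fin d → Bool, r (σ e) * chi {i} (σ e)
      = ∑ e : Fin d → Bool, r e * chi {i} e := Equiv.sum_comp σ (fun e => r e * chi {i} e)
  have : Shat r {i} = - Shat r {i} := by
    nth_rewrite 1 [Shat, ← hre]
    rw [Shat, ← Finset.sum_neg_distrib]
    apply sum_congr rfl
    intro e _
    have hσe : σ e = fun j => !(e j) := rfl
    have h1 : chi {i} (σ e) = - chi {i} e := by
      rw [hσe]; simp [chi_singleton, sgn_not]
    have h2 : r (σ e) = r e := by rw [hσe]; exact heven e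
    rw [h1, h2]
    ring
  linarith

/-- The Latała–Oleszkiewicz / Szarek spectral bound. -/
lemma key_spectral (r : (Fin d → Bool) → ℝ) (hpos : ∀ e, 0 ≤ r e)
    (heven : ∀ e : Fin d → Bool, r (fun j => !(e j)) = r e)
    (hptw : ∀ e, ((d:ℝ) - 2) * r e ≤ ∑ i : Fin d, r (flp i e)) :
    (2:ℝ)^d * ∑ e : Fin d → Bool, r e ^ 2 ≤ 2 * (∑ e : Fin d → Bool, r e) ^ 2 := by
  -- Parseval for r with itself
  have hP : ∑ A : Finset (Fin d), Shat r A ^ 2 = 2^d * ∑ e : Fin d → Bool, r e ^ 2 := by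
    rw [show ∀ (S : Finset (Finset (Fin d))), ∑ A ∈ S, Shat r A ^2 = ∑ A ∈ S, Shat r A * Shat r A
        from fun S => sum_congr rfl (fun A _ => sq (Shat r A)), parseval]
    congr 1
    exact sum_congr rfl fun e _ => (sq (r e)).symm
  have hcount : ∀ A : Finset (Fin d), ∑ i : Fin d, (if i ∈ A then (-1:ℝ) else 1)
      = (d:ℝ) - 2 * A.card := by
    intro A
    have h1 : ∀ i : Fin d, (if i ∈ A then (-1:ℝ) else 1)
        = 1 - 2 * (if i ∈ A then (1:ℝ) else 0) := by
      intro i; by_cases hi : i ∈ A <;> simp [hi] <;> norm_num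
    simp only [h1]
    rw [Finset.sum_sub_distrib, ← Finset.mul_sum, Finset.sum_ite_mem, univ_inter]
    simp [mul_comm]
  -- quadratic-form inequality
  have lhs_le : ((d:ℝ)-2) * (2^d * ∑ e : Fin d → Bool, r e ^2)
      ≤ ∑ A : Finset (Fin d), ((d:ℝ) - 2 * A.card) * Shat r A ^ 2 := by
    have step1 : ((d:ℝ)-2) * ∑ e : Fin d → Bool, r e ^2
        ≤ ∑ i : Fin d, ∑ e : Fin d → Bool, r e * r (flp i e) := by
      calc ((d:ℝ)-2) * ∑ e : Fin d → Bool, r e^2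
          = ∑ e : Fin d → Bool, r e * (((d:ℝ)-2) * r e) := by
            rw [Finset.mul_sum]; exact sum_congr rfl fun e _ => by ring
        _ ≤ ∑ e : Fin d → Bool, r e * (∑ i : Fin d, r (flp i e)) :=
            sum_le_sum (fun e _ => mul_le_mul_of_nonneg_left (hptw e) (hpos e))
        _ = ∑ e : Fin d → Bool, ∑ i : Fin d, r e * r (flp i e) := by
            exact sum_congr rfl fun e _ => Finset.mul_sum _ _ _
        _ = ∑ i : Fin d, ∑ e : Fin d → Bool, r e * r (flp i e) := Finset.sum_comm
    have step2 : ∀ i : Fin d, 2^d * ∑ e : Fin d → Bool, r e * r (flp i e)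
        = ∑ A : Finset (Fin d), (if i ∈ A then (-1:ℝ) else 1) * Shat r A ^ 2 := by
      intro i
      rw [← parseval r (fun e => r (flp i e))]
      apply sum_congr rfl
      intro A _
      rw [Shat_flp]
      ring
    calc ((d:ℝ)-2) * (2^d * ∑ e : Fin d → Bool, r e ^2)
        = 2^d * (((d:ℝ)-2) * ∑ e : Fin d → Bool, r e ^2) := by ring
      _ ≤ 2^d * ∑ i : Fin d, ∑ e : Fin d → Bool, r e * r (flp i e) := by
          apply mul_le_mul_of_nonneg_left step1 (by positivity)
      _ = ∑ i : Fin d, 2^d * ∑ e : Fin d → Bool, r e * r (flp i e) := Finset.mul_sum _ _ _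
      _ = ∑ i : Fin d, ∑ A : Finset (Fin d), (if i ∈ A then (-1:ℝ) else 1) * Shat r A ^ 2 := 
          sum_congr rfl fun i _ => step2 i
      _ = ∑ A : Finset (Fin d), ∑ i : Fin d, (if i ∈ A then (-1:ℝ) else 1) * Shat r A ^ 2 :=
          Finset.sum_comm
      _ = ∑ A : Finset (Fin d), ((d:ℝ) - 2 * A.card) * Shat r A ^ 2 := by
          apply sum_congr rfl
          intro A _
          rw [← Finset.sum_mul, hcount A]
  rw [← hP] at lhs_le
  -- extract: ∑_{A ≠ ∅} (card A - 1) * Shat² ≤ Shat ∅ ²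
  have hmem : (∅ : Finset (Fin d)) ∈ (univ : Finset (Finset (Fin d))) := mem_univ _
  have hsplit : ∀ (F : Finset (Fin d) → ℝ),
      ∑ A ∈ (univ : Finset (Finset (Fin d))).erase ∅, F A + F ∅
        = ∑ A : Finset (Fin d), F A := fun F => Finset.sum_erase_add _ _ hmem
  have h4 : ∑ A ∈ (univ : Finset (Finset (Fin d))).erase ∅, ((A.card:ℝ) - 1) * Shat r A ^ 2
      ≤ Shat r ∅ ^ 2 := by
    have e1 := hsplit (fun A => ((d:ℝ) - 2 * A.card) * Shat r A ^ 2)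
    have e2 := hsplit (fun A => ((d:ℝ) - 2) * Shat r A ^ 2)
    have e3 : ∑ A : Finset (Fin d), ((d:ℝ) - 2) * Shat r A ^ 2
        = ((d:ℝ) - 2) * ∑ A : Finset (Fin d), Shat r A ^ 2 := (Finset.mul_sum _ _ _).symm
    have e4 : ∑ A ∈ (univ : Finset (Finset (Fin d))).erase ∅, ((d:ℝ) - 2 * A.card) * Shat r A ^ 2
        - ∑ A ∈ (univ : Finset (Finset (Fin d))).erase ∅, ((d:ℝ) - 2) * Shat r A ^ 2
        = - 2 * ∑ A ∈ (univ : Finset (Finset (Fin d))).erase ∅, ((A.card:ℝ) - 1) * Shat r A ^ 2 := by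
      rw [← Finset.sum_sub_distrib, Finset.mul_sum]
      exact sum_congr rfl fun A _ => by ring
    nlinarith [lhs_le]
  have h5 : ∑ A ∈ (univ : Finset (Finset (Fin d))).erase ∅, Shat r A ^ 2
      ≤ ∑ A ∈ (univ : Finset (Finset (Fin d))).erase ∅, ((A.card:ℝ) - 1) * Shat r A ^ 2 := by
    apply sum_le_sum
    intro A hA
    have hAne : A ≠ ∅ := Finset.ne_of_mem_erase hA
    have hc1 : 1 ≤ A.card := Finset.card_pos.2 (Finset.nonempty_iff_ne_empty.2 hAne)
    rcases eq_or_lt_of_le hc1 with hc | hc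
    · obtain ⟨i, rfl⟩ := Finset.card_eq_one.1 hc.symm
      rw [Shat_even_singleton r heven i]
      norm_num
    · have : (2:ℝ) ≤ A.card := by exact_mod_cast hc
      nlinarith [sq_nonneg (Shat r A)]
  have hfin := hsplit (fun A => Shat r A ^ 2)
  have : ∑ A : Finset (Fin d), Shat r A ^ 2 ≤ 2 * Shat r ∅ ^ 2 := by linarith
  rw [hP, Shat_empty] at this
  linarith

lemma signVec_apply (e : Fin d → Bool) (j : Fin d) : signVec e j = sgn (e j) := rfl

lemma inner_signVec (g : EuclideanSpace ℝ (Fin d)) (e : Fin d → Bool) :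
    (inner ℝ g (signVec e) : ℝ) = ∑ j : Fin d, g j * chi {j} e := by
  rw [PiLp.inner_apply]
  exact Finset.sum_congr rfl fun j _ => by
    rw [chi_singleton, ← signVec_apply]; simp; ring

lemma sum_inner_sq (g : EuclideanSpace ℝ (Fin d)) :
    ∑ e : Fin d → Bool, (inner ℝ g (signVec e) : ℝ) ^ 2 = 2^d * ‖g‖ ^ 2 := by
  have expand : ∀ e : Fin d → Bool, (inner ℝ g (signVec e) : ℝ) ^ 2
      = ∑ j : Fin d, ∑ k : Fin d, (g j * g k) * (chi {j} e * chi {k} e) := by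
    intro e
    rw [inner_signVec, sq, Finset.sum_mul_sum]
    exact Finset.sum_congr rfl fun j _ => Finset.sum_congr rfl fun k _ => by ring
  simp only [expand]
  rw [Finset.sum_comm]
  have hj : ∀ j : Fin d, ∑ e : Fin d → Bool, ∑ k : Fin d, (g j * g k) * (chi {j} e * chi {k} e)
      = g j * g j * 2^d := by
    intro j
    rw [Finset.sum_comm]
    have hk : ∀ k : Fin d, ∑ e : Fin d → Bool, (g j * g k) * (chi {j} e * chi {k} e)
        = (g j * g k) * (if ({j} : Finset (Fin d)) = {k} then (2:ℝ)^d else 0) := by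
      intro k
      rw [← sum_chi_mul_chi, Finset.mul_sum]
    simp only [hk]
    rw [Finset.sum_eq_single j]
    · simp
    · intro k _ hk2
      rw [if_neg, mul_zero]
      rw [Finset.singleton_inj]
      exact fun h => hk2 h.symm
    · intro h; exact absurd (mem_univ j) h
  simp only [hj]
  rw [← Finset.sum_mul]
  have hnorm : ∑ j : Fin d, g j * g j = ‖g‖^2 := by
    rw [← real_inner_self_eq_norm_sq, PiLp.inner_apply]
    exact Finset.sum_congr rfl fun j _ => by simp; ring
  rw [hnorm]
  ring

lemma signVec_neg (e : Fin d → Bool) :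
    signVec (fun j => !(e j)) = - signVec e := by
  ext j
  rw [show (- signVec e) j = - (signVec e j) from rfl]
  simp only [signVec]
  cases e j <;> norm_num

lemma sum_signVec_flp (e : Fin d → Bool) :
    ∑ i : Fin d, signVec (flp i e) = ((d:ℝ) - 2) • signVec e := by
  ext j
  rw [WithLp.ofLp_sum, Finset.sum_apply]
  have hterm : ∀ i : Fin d, signVec (flp i e) j
      = sgn (e j) + (if j = i then -2 * sgn (e j) else 0) := by
    intro i
    rw [signVec_apply, flp_apply]
    by_cases h : j = i
    · simp [h, sgn_not]; ring
    · simp [h]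
  simp only [hterm]
  rw [Finset.sum_add_distrib, Finset.sum_const, Finset.sum_ite_eq univ j (fun _ => -2 * sgn (e j))]
  simp only [mem_univ, if_pos, card_univ, Fintype.card_fin, nsmul_eq_mul]
  have : (((d:ℝ) - 2) • signVec e) j = ((d:ℝ) - 2) * sgn (e j) := rfl
  rw [this]
  ring

lemma khintchine (g : EuclideanSpace ℝ (Fin d)) :
    (2:ℝ)^d * (‖g‖ / Real.sqrt 2) ≤ ∑ e : Fin d → Bool, |(inner ℝ g (signVec e) : ℝ)| := by
  set r : (Fin d → Bool) → ℝ := fun e => |(inner ℝ g (signVec e) : ℝ)| with hr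
  have hpos : ∀ e, 0 ≤ r e := fun e => abs_nonneg _
  have heven : ∀ e : Fin d → Bool, r (fun j => !(e j)) = r e := by
    intro e
    simp only [hr, signVec_neg, inner_neg_right, abs_neg]
  have hptw : ∀ e, ((d:ℝ) - 2) * r e ≤ ∑ i : Fin d, r (flp i e) := by
    intro e
    have hlin : ∑ i : Fin d, (inner ℝ g (signVec (flp i e)) : ℝ)
        = ((d:ℝ) - 2) * (inner ℝ g (signVec e) : ℝ) := by
      rw [← inner_sum, sum_signVec_flp, real_inner_smul_right]
    calc ((d:ℝ) - 2) * r e ≤ |((d:ℝ) - 2)| * r e :=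
          mul_le_mul_of_nonneg_right (le_abs_self _) (hpos e)
      _ = |((d:ℝ) - 2) * (inner ℝ g (signVec e) : ℝ)| := by rw [abs_mul]
      _ = |∑ i : Fin d, (inner ℝ g (signVec (flp i e)) : ℝ)| := by rw [hlin]
      _ ≤ ∑ i : Fin d, r (flp i e) := Finset.abs_sum_le_sum_abs _ _
  have hkey := key_spectral r hpos heven hptw
  have hsq : ∑ e : Fin d → Bool, r e ^ 2 = 2^d * ‖g‖ ^ 2 := by
    rw [← sum_inner_sq g]
    exact Finset.sum_congr rfl fun e _ => sq_abs _
  rw [hsq] at hkey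
  have hb : 0 ≤ ∑ e : Fin d → Bool, r e := Finset.sum_nonneg fun e _ => hpos e
  have ha : (0:ℝ) ≤ 2^d * ‖g‖ := by positivity
  have h2 : (2^d * ‖g‖)^2 ≤ (Real.sqrt 2 * ∑ e : Fin d → Bool, r e)^2 := by
    rw [mul_pow, mul_pow, Real.sq_sqrt (by norm_num : (0:ℝ) ≤ 2)]
    nlinarith [hkey]
  have h3 : 2^d * ‖g‖ ≤ Real.sqrt 2 * ∑ e : Fin d → Bool, r e :=
    le_of_pow_le_pow_left₀ two_ne_zero (by positivity) h2
  have hs2 : (0:ℝ) < Real.sqrt 2 := Real.sqrt_pos.2 (by norm_num)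
  rw [show (2:ℝ)^d * (‖g‖ / Real.sqrt 2) = (2^d * ‖g‖) / Real.sqrt 2 by ring]
  rw [div_le_iff₀ hs2]
  calc (2:ℝ)^d * ‖g‖ ≤ Real.sqrt 2 * ∑ e : Fin d → Bool, r e := h3
    _ = (∑ e : Fin d → Bool, r e) * Real.sqrt 2 := mul_comm _ _

lemma descent {E : Type*} [NormedAddCommGroup E] [InnerProductSpace ℝ E]
    [CompleteSpace E]
    (f : E → ℝ) (L : ℝ) (hL : 0 ≤ L) (hdiff : Differentiable ℝ f)
    (hlip : ∀ x y, ‖gradient f x - gradient f y‖ ≤ L * ‖x - y‖)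
    (x h : E) :
    f (x + h) ≤ f x + inner ℝ (gradient f x) h + L / 2 * ‖h‖ ^ 2 := by
  set g : E → E := gradient f with hg
  have hderiv : ∀ t : ℝ, HasDerivAt (fun t : ℝ => f (x + t • h))
      (inner ℝ (g (x + t • h)) h : ℝ) t := by
    intro t
    have hγ : HasDerivAt (fun t : ℝ => x + t • h) h t := by
      simpa using ((hasDerivAt_id t).smul_const h).const_add x
    have hf : HasFDerivAt f (InnerProductSpace.toDual ℝ E (g (x + t • h))) (x + t • h) :=
      (hdiff (x + t • h)).hasGradientAt.hasFDerivAt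
    have := hf.comp_hasDerivAt t hγ
    exact this
  set φ : ℝ → ℝ := fun t => f (x + t • h) - t * inner ℝ (g x) h - L * t ^ 2 * ‖h‖ ^ 2 / 2 with hφ
  have hφderiv : ∀ t : ℝ, HasDerivAt φ
      ((inner ℝ (g (x + t • h)) h : ℝ) - inner ℝ (g x) h - L * t * ‖h‖ ^ 2) t := by
    intro t
    have h1 : HasDerivAt (fun t : ℝ => t * (inner ℝ (g x) h : ℝ)) (inner ℝ (g x) h : ℝ) t := by
      simpa using (hasDerivAt_id t).mul_const (inner ℝ (g x) h : ℝ)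
    have h2 : HasDerivAt (fun t : ℝ => L * t ^ 2 * ‖h‖ ^ 2 / 2) (L * t * ‖h‖ ^ 2) t := by
      have := ((hasDerivAt_pow 2 t).const_mul L).mul_const (‖h‖ ^ 2 / 2)
      have e1 : (fun t : ℝ => L * t ^ 2 * ‖h‖ ^ 2 / 2) = fun y => L * y ^ 2 * (‖h‖ ^ 2 / 2) := by
        funext s; ring
      rw [e1]
      exact this.congr_deriv (by rw [show (2:ℕ) - 1 = 1 from rfl]; push_cast; ring)
    exact ((hderiv t).sub h1).sub h2
  have hanti : AntitoneOn φ (Set.Icc 0 1) := by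
    apply antitoneOn_of_deriv_nonpos (convex_Icc 0 1)
    · exact fun t _ => ((hφderiv t).continuousAt).continuousWithinAt
    · exact fun t _ => ((hφderiv t).differentiableAt).differentiableWithinAt
    · intro t ht
      rw [interior_Icc] at ht
      rw [(hφderiv t).deriv]
      have h1 : (inner ℝ (g (x + t • h)) h : ℝ) - inner ℝ (g x) h = inner ℝ (g (x + t • h) - g x) h := by
        rw [inner_sub_left]
      rw [h1, sub_nonpos]
      calc (inner ℝ (g (x + t • h) - g x) h : ℝ) ≤ ‖g (x + t • h) - g x‖ * ‖h‖ :=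
            real_inner_le_norm _ _
        _ ≤ (L * ‖(x + t • h) - x‖) * ‖h‖ :=
            mul_le_mul_of_nonneg_right (hlip _ _) (norm_nonneg _)
        _ = L * t * ‖h‖ ^ 2 := by
            rw [add_sub_cancel_left, norm_smul]
            simp [abs_of_nonneg (le_of_lt ht.1)]
            ring
  have := hanti (Set.left_mem_Icc.2 zero_le_one) (Set.right_mem_Icc.2 zero_le_one) zero_le_one
  simp only [hφ] at this
  simp only [one_smul, zero_smul, add_zero, one_pow, zero_pow, mul_zero, zero_mul,
    mul_one, sub_zero, mul_zero] at this
  linarith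

lemma norm_signVec (e : Fin d → Bool) : ‖signVec e‖ ^ 2 = (d : ℝ) := by
  rw [← real_inner_self_eq_norm_sq, PiLp.inner_apply]
  have : ∀ j : Fin d, (inner ℝ (signVec e j) (signVec e j) : ℝ) = 1 := by
    intro j
    simp only [signVec, RCLike.inner_apply, conj_trivial]
    cases e j <;> norm_num
  rw [Finset.sum_congr rfl fun j _ => this j]
  simp

/-- one-step descent inequality for the S2P update under the
general (`L`-gradient-Lipschitz) smoothness assumption:
`E[min(f(x + αs), f(x − αs))] ≤ f(x) − (α/√2)‖∇f(x)‖ + L α² d / 2`,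
the expectation being the uniform average over all `2^d` Rademacher vectors. -/
theorem stmt2 (d : ℕ) (hd : 1 ≤ d) (f : EuclideanSpace ℝ (Fin d) → ℝ) (L : ℝ) (hL : 0 < L)
    (hdiff : Differentiable ℝ f)
    (hlip : ∀ x y : EuclideanSpace ℝ (Fin d),
      ‖gradient f x - gradient f y‖ ≤ L * ‖x - y‖)
    (x : EuclideanSpace ℝ (Fin d)) (α : ℝ) (hα : 0 ≤ α) :
    (∑ e : Fin d → Bool, min (f (x + α • signVec e)) (f (x - α • signVec e))) / (2 : ℝ) ^ d
      ≤ f x - (α / Real.sqrt 2) * ‖gradient f x‖ + L * α ^ 2 * d / 2 := by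
  set g : EuclideanSpace ℝ (Fin d) := gradient f x with hg
  set C : ℝ := L * α ^ 2 * d / 2 with hC
  set t : (Fin d → Bool) → ℝ := fun e => (inner ℝ g (signVec e) : ℝ) with ht
  have hnormsq : ∀ e : Fin d → Bool, ‖α • signVec e‖ ^ 2 = α ^ 2 * d := by
    intro e
    rw [norm_smul, mul_pow, norm_signVec, Real.norm_eq_abs, sq_abs]
  have h1 : ∀ e : Fin d → Bool, f (x + α • signVec e) ≤ f x + α * t e + C := by
    intro e
    have := descent f L hL.le hdiff hlip x (α • signVec e)
    rw [real_inner_smul_right, hnormsq e] at this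
    calc f (x + α • signVec e) ≤ f x + α * (inner ℝ g (signVec e) : ℝ) + L / 2 * (α ^ 2 * d) := this
      _ = f x + α * t e + C := by rw [ht, hC]; ring
  have h2 : ∀ e : Fin d → Bool, f (x - α • signVec e) ≤ f x - α * t e + C := by
    intro e
    have := descent f L hL.le hdiff hlip x (-(α • signVec e))
    rw [inner_neg_right, real_inner_smul_right, norm_neg, hnormsq e] at this
    calc f (x - α • signVec e) = f (x + -(α • signVec e)) := by rw [sub_eq_add_neg]
      _ ≤ f x + -(α * (inner ℝ g (signVec e) : ℝ)) + L / 2 * (α ^ 2 * d) := this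
      _ = f x - α * t e + C := by rw [ht, hC]; ring
  have hmin : ∀ e : Fin d → Bool,
      min (f (x + α • signVec e)) (f (x - α • signVec e)) ≤ f x - α * |t e| + C := by
    intro e
    rcases le_total 0 (t e) with hte | hte
    · calc min _ _ ≤ f (x - α • signVec e) := min_le_right _ _
        _ ≤ f x - α * t e + C := h2 e
        _ = f x - α * |t e| + C := by rw [abs_of_nonneg hte]
    · calc min _ _ ≤ f (x + α • signVec e) := min_le_left _ _
        _ ≤ f x + α * t e + C := h1 e
        _ = f x - α * |t e| + C := by rw [abs_of_nonpos hte]; ring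
  have hcard : (Finset.univ : Finset (Fin d → Bool)).card = 2 ^ d := by
    rw [Finset.card_univ]
    simp [Fintype.card_fun]
  have hsum : ∑ e : Fin d → Bool, min (f (x + α • signVec e)) (f (x - α • signVec e))
      ≤ 2^d * (f x + C) - α * ∑ e : Fin d → Bool, |t e| := by
    calc ∑ e : Fin d → Bool, min (f (x + α • signVec e)) (f (x - α • signVec e))
        ≤ ∑ e : Fin d → Bool, (f x - α * |t e| + C) := sum_le_sum fun e _ => hmin e
      _ = 2^d * (f x + C) - α * ∑ e : Fin d → Bool, |t e| := by
          rw [Finset.sum_add_distrib, Finset.sum_sub_distrib, Finset.sum_const, Finset.sum_const,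
            hcard, ← Finset.mul_sum, nsmul_eq_mul, nsmul_eq_mul]
          push_cast
          ring
  have hkh := khintchine g
  have hfinal : ∑ e : Fin d → Bool, min (f (x + α • signVec e)) (f (x - α • signVec e))
      ≤ 2^d * (f x - (α / Real.sqrt 2) * ‖g‖ + C) := by
    have hα2 : α * (2^d * (‖g‖ / Real.sqrt 2)) ≤ α * ∑ e : Fin d → Bool, |t e| :=
      mul_le_mul_of_nonneg_left hkh hα
    calc ∑ e : Fin d → Bool, min (f (x + α • signVec e)) (f (x - α • signVec e))
        ≤ 2^d * (f x + C) - α * ∑ e : Fin d → Bool, |t e| := hsum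
      _ ≤ 2^d * (f x + C) - α * (2^d * (‖g‖ / Real.sqrt 2)) := by linarith
      _ = 2^d * (f x - (α / Real.sqrt 2) * ‖g‖ + C) := by ring
  rw [div_le_iff₀ (by positivity : (0:ℝ) < 2^d)]
  calc ∑ e : Fin d → Bool, min (f (x + α • signVec e)) (f (x - α • signVec e))
      ≤ 2^d * (f x - (α / Real.sqrt 2) * ‖g‖ + C) := hfinal
    _ = (f x - α / Real.sqrt 2 * ‖g‖ + C) * 2 ^ d := mul_comm _ _
end

section
/- Let d ≥ 1, let f : ℝ^d → ℝ be differentiable and L-gradient Lipschitz with L > 0, let x ∈ ℝ^d, let ρ > 0, and let s ∈ ℝ^d satisfy ‖s‖² = d. Then the dynamic step size α = |f(x + ρs) − f(x − ρs)|/(2ρLd) and the optimal step size α* = |⟨∇f(x), s⟩|/(Ld) satisfy |α − α*| ≤ ρ/2. -/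
private lemma stmt5_key (d : ℕ) (f : EuclideanSpace ℝ (Fin d) → ℝ) (L : ℝ) (hL : 0 < L)
    (hdiff : Differentiable ℝ f)
    (hlip : ∀ x y : EuclideanSpace ℝ (Fin d),
      ‖gradient f x - gradient f y‖ ≤ L * ‖x - y‖)
    (x : EuclideanSpace ℝ (Fin d)) (ρ : ℝ) (hρ : 0 < ρ)
    (s : EuclideanSpace ℝ (Fin d)) :
    |(f (x + ρ • s) - f (x - ρ • s)) - 2 * ρ * (inner ℝ (gradient f x) s : ℝ)|
      ≤ L * ρ ^ 2 * ‖s‖ ^ 2 := by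
  set G : ℝ → ℝ := fun t => (inner ℝ (gradient f (x + t • s)) s : ℝ) with hG
  have hct : Continuous fun t : ℝ => x + t • s := by continuity
  have hgradlip : LipschitzWith (Real.toNNReal L) (gradient f) := by
    apply LipschitzWith.of_dist_le_mul
    intro a b
    rw [dist_eq_norm, dist_eq_norm, Real.coe_toNNReal _ hL.le]
    exact hlip a b
  have hGcont : Continuous G := by
    exact (continuous_inner.comp ((hgradlip.continuous.comp hct).prodMk continuous_const))
  have hderiv : ∀ t : ℝ, HasDerivAt (fun t => f (x + t • s)) (G t) t := by
    intro t
    have h1 : HasDerivAt (fun t : ℝ => x + t • s) s t := by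
      simpa using ((hasDerivAt_id t).smul_const s).const_add x
    have h2 := ((hdiff (x + t • s)).hasGradientAt.hasFDerivAt).comp_hasDerivAt t h1
    exact h2
  have hFTC : ∫ t in (-ρ)..ρ, G t = f (x + ρ • s) - f (x - ρ • s) := by
    rw [intervalIntegral.integral_eq_sub_of_hasDerivAt (fun t _ => hderiv t)
      (hGcont.intervalIntegrable _ _)]
    congr 1
    simp [sub_eq_add_neg, neg_smul]
  have hconst : ∫ t in (-ρ)..ρ, (inner ℝ (gradient f x) s : ℝ)
      = 2 * ρ * (inner ℝ (gradient f x) s : ℝ) := by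
    rw [intervalIntegral.integral_const, smul_eq_mul]; ring
  have key : (f (x + ρ • s) - f (x - ρ • s)) - 2 * ρ * (inner ℝ (gradient f x) s : ℝ)
      = ∫ t in (-ρ)..ρ, (G t - (inner ℝ (gradient f x) s : ℝ)) := by
    rw [intervalIntegral.integral_sub (hGcont.intervalIntegrable _ _)
      (intervalIntegrable_const), hFTC, hconst]
  rw [key]
  have hbound : ∀ t ∈ Set.uIcc (-ρ) ρ,
      |G t - (inner ℝ (gradient f x) s : ℝ)| ≤ L * ‖s‖ ^ 2 * |t| := by
    intro t _
    have : G t - (inner ℝ (gradient f x) s : ℝ)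
        = (inner ℝ (gradient f (x + t • s) - gradient f x) s : ℝ) := by
      simp [hG, inner_sub_left]
    rw [this]
    calc |(inner ℝ (gradient f (x + t • s) - gradient f x) s : ℝ)|
        ≤ ‖gradient f (x + t • s) - gradient f x‖ * ‖s‖ := abs_real_inner_le_norm _ _
      _ ≤ (L * ‖(x + t • s) - x‖) * ‖s‖ := by
          gcongr; exact hlip _ _
      _ = L * ‖s‖ ^ 2 * |t| := by
          simp [norm_smul]; ring
  have habs : ∫ t in (-ρ)..ρ, L * ‖s‖ ^ 2 * |t| = L * ρ ^ 2 * ‖s‖ ^ 2 := by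
    rw [intervalIntegral.integral_const_mul]
    have hsplit : ∫ t in (-ρ)..ρ, |t|
        = (∫ t in (-ρ)..(0:ℝ), |t|) + ∫ t in (0:ℝ)..ρ, |t| :=
      (intervalIntegral.integral_add_adjacent_intervals
        ((continuous_abs.intervalIntegrable _ _))
        ((continuous_abs.intervalIntegrable _ _))).symm
    have h1 : ∫ t in (-ρ)..(0:ℝ), |t| = ρ ^ 2 / 2 := by
      rw [intervalIntegral.integral_congr (g := fun t => -t)
        (fun t ht => by
          rw [Set.uIcc_of_le (by linarith)] at ht
          exact abs_of_nonpos ht.2),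
        intervalIntegral.integral_neg, integral_id]
      ring
    have h2 : ∫ t in (0:ℝ)..ρ, |t| = ρ ^ 2 / 2 := by
      rw [intervalIntegral.integral_congr (g := fun t => t)
        (fun t ht => by
          rw [Set.uIcc_of_le (by linarith)] at ht
          exact abs_of_nonneg ht.1),
        integral_id]
      ring
    rw [hsplit, h1, h2]; ring
  calc |∫ t in (-ρ)..ρ, (G t - (inner ℝ (gradient f x) s : ℝ))|
      ≤ abs (∫ t in (-ρ)..ρ, L * ‖s‖ ^ 2 * |t|) := by
        refine le_trans ?_ (le_abs_self _)
        refine intervalIntegral.norm_integral_le_of_norm_le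
            (f := fun t => G t - (inner ℝ (gradient f x) s : ℝ)) (μ := MeasureTheory.volume) (by linarith) ?_ ?_
        · filter_upwards with t ht
          exact hbound t (Set.Icc_subset_uIcc (Set.Ioc_subset_Icc_self ht))
        · exact (by continuity : Continuous fun t : ℝ => L * ‖s‖ ^ 2 * |t|).intervalIntegrable _ _
    _ = L * ρ ^ 2 * ‖s‖ ^ 2 := by
        rw [habs, abs_of_nonneg (by positivity)]


/-- for `s` with `‖s‖² = d`, the dynamic step size
`α = |f(x + ρs) − f(x − ρs)|/(2ρLd)` and the optimal step size
`α* = |⟨∇f(x), s⟩|/(Ld)` satisfy `|α − α*| ≤ ρ/2`. -/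
theorem stmt5 (d : ℕ) (hd : 1 ≤ d) (f : EuclideanSpace ℝ (Fin d) → ℝ) (L : ℝ) (hL : 0 < L)
    (hdiff : Differentiable ℝ f)
    (hlip : ∀ x y : EuclideanSpace ℝ (Fin d),
      ‖gradient f x - gradient f y‖ ≤ L * ‖x - y‖)
    (x : EuclideanSpace ℝ (Fin d)) (ρ : ℝ) (hρ : 0 < ρ)
    (s : EuclideanSpace ℝ (Fin d)) (hs : ‖s‖ ^ 2 = (d : ℝ)) :
    |(|f (x + ρ • s) - f (x - ρ • s)| / (2 * ρ * L * d))
        - (|(inner ℝ (gradient f x) s : ℝ)| / (L * d))|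
      ≤ ρ / 2 := by
  have hd0 : (0 : ℝ) < d := by exact_mod_cast hd
  set A : ℝ := f (x + ρ • s) - f (x - ρ • s) with hA
  set c : ℝ := (inner ℝ (gradient f x) s : ℝ) with hc
  have hkey : |A - 2 * ρ * c| ≤ L * ρ ^ 2 * d := by
    rw [← hs]
    exact stmt5_key d f L hL hdiff hlip x ρ hρ s
  have habs2 : |2 * ρ * c| = 2 * ρ * |c| := by
    rw [abs_mul, abs_of_pos (by linarith)]
  have h1 : abs (|A| - 2 * ρ * |c|) ≤ L * ρ ^ 2 * d := by
    calc abs (|A| - 2 * ρ * |c|) = abs (|A| - |2 * ρ * c|) := by rw [habs2]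
      _ ≤ |A - 2 * ρ * c| := abs_abs_sub_abs_le_abs_sub _ _
      _ ≤ L * ρ ^ 2 * d := hkey
  have hD : (0 : ℝ) < 2 * ρ * L * d := by positivity
  have expand : |A| / (2 * ρ * L * d) - |c| / (L * d)
      = (|A| - 2 * ρ * |c|) / (2 * ρ * L * d) := by
    field_simp
  rw [expand, abs_div, abs_of_pos hD, div_le_iff₀ hD]
  nlinarith [h1]
end

section
/- Let f : ℝ^d → ℝ be twice continuously differentiable and (L0, L1)-smooth with L0, L1 > 0, let c > 0, and set A(c) = 1 + e^c − (e^c − 1)/c and B(c) = (e^c − 1)/c. Then for all x, y ∈ ℝ^d with ‖y − x‖ ≤ c/L1, f(y) ≤ f(x) + ⟨∇f(x), y − x⟩ + ((A(c) L0 + B(c) L1 ‖∇f(x)‖)/2) ‖y − x‖². -/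
open Set Real intervalIntegral

/-- Chord bound for `exp` from convexity: for `0 ≤ u ≤ c`,
`exp u - 1 ≤ u * ((exp c - 1)/c)`. -/
lemma aux_chord {c : ℝ} (hc : 0 < c) {u : ℝ} (h0 : 0 ≤ u) (h1 : u ≤ c) :
    Real.exp u - 1 ≤ u * ((Real.exp c - 1) / c) := by
  have h := convexOn_exp.2 (Set.mem_univ (0:ℝ)) (Set.mem_univ c)
    (show (0:ℝ) ≤ 1 - u / c by have := div_le_one_of_le₀ h1 hc.le; linarith)
    (show (0:ℝ) ≤ u / c by positivity) (by ring)
  simp only [smul_eq_mul, mul_zero, zero_add, Real.exp_zero, mul_one] at h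
  have hc' : c ≠ 0 := hc.ne'
  have : Real.exp u ≤ 1 - u / c + u / c * Real.exp c := by
    convert h using 2
    · rfl
    · rw [div_mul_cancel₀ _ hc']
  have hrw : u * ((Real.exp c - 1) / c) = u / c * Real.exp c - u / c := by ring
  rw [hrw]
  linarith

/-- `∫ s in 0..t, exp (K * s) = (exp (K * t) - 1) / K` for `K ≠ 0`. -/
lemma aux_integral_exp_mul {K : ℝ} (hK : K ≠ 0) (t : ℝ) :
    ∫ s in (0:ℝ)..t, Real.exp (K * s) = (Real.exp (K * t) - 1) / K := by
  have hder : ∀ s ∈ Set.uIcc (0:ℝ) t,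
      HasDerivAt (fun s => Real.exp (K * s) / K) (Real.exp (K * s)) s := by
    intro s _
    have h1 : HasDerivAt (fun s : ℝ => K * s) K s := by
      simpa using (hasDerivAt_id s).const_mul K
    have h2 := (h1.exp).div_const K
    simpa [mul_div_cancel_left₀ _ hK, mul_comm] using h2
  have hint : IntervalIntegrable (fun s => Real.exp (K * s)) MeasureTheory.volume 0 t :=
    (Real.continuous_exp.comp (continuous_const.mul continuous_id)).intervalIntegrable _ _
  have := intervalIntegral.integral_eq_sub_of_hasDerivAt hder hint
  rw [this]
  rw [mul_zero, Real.exp_zero]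
  ring

/-- `B(c) ≤ A(c)`, i.e. `2 (e^c − 1) ≤ c (1 + e^c)`, by integrating the chord bound. -/
lemma aux_B_le_A {c : ℝ} (hc : 0 < c) :
    (Real.exp c - 1) / c ≤ 1 + Real.exp c - (Real.exp c - 1) / c := by
  -- integrate `exp s - 1 ≤ s * B` over `[0, c]`
  set B := (Real.exp c - 1) / c with hB
  have hint1 : IntervalIntegrable (fun s => Real.exp s - 1) MeasureTheory.volume 0 c :=
    (Real.continuous_exp.sub continuous_const).intervalIntegrable _ _
  have hint2 : IntervalIntegrable (fun s : ℝ => s * B) MeasureTheory.volume 0 c :=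
    (continuous_id.mul continuous_const).intervalIntegrable _ _
  have hmono := intervalIntegral.integral_mono_on hc.le hint1 hint2
    (fun s hs => aux_chord hc hs.1 hs.2)
  have h1 : ∫ s in (0:ℝ)..c, (Real.exp s - 1) = Real.exp c - 1 - c := by
    rw [intervalIntegral.integral_sub (Real.continuous_exp.intervalIntegrable _ _)
      (continuous_const.intervalIntegrable _ _)]
    simp [integral_exp]
  have h2 : ∫ s in (0:ℝ)..c, s * B = c ^ 2 / 2 * B := by
    rw [intervalIntegral.integral_mul_const, integral_id]
    ring
  rw [h1, h2] at hmono
  have hBc : B * c = Real.exp c - 1 := by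
    rw [hB, div_mul_cancel₀ _ hc.ne']
  -- from `e^c - 1 - c ≤ c² B / 2 = c (e^c - 1) / 2`, get `2B ≤ 1 + e^c`
  have key : Real.exp c - 1 - c ≤ c * (Real.exp c - 1) / 2 := by
    nlinarith [hmono, hBc]
  rw [div_le_iff₀ hc] at *
  nlinarith [hBc, key, hc]

set_option maxHeartbeats 2000000 in
/-- descent inequality under relaxed `(L0, L1)`-smoothness,
Lemma C.1: with `A(c) = 1 + e^c − (e^c − 1)/c` and `B(c) = (e^c − 1)/c`, for
all `x, y` with `‖y − x‖ ≤ c/L1`,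
`f(y) ≤ f(x) + ⟨∇f(x), y − x⟩ + ((A(c)L0 + B(c)L1‖∇f(x)‖)/2)‖y − x‖²`. -/
theorem stmt9 {d : ℕ} (f : EuclideanSpace ℝ (Fin d) → ℝ)
    (L0 L1 : ℝ) (hL0 : 0 < L0) (hL1 : 0 < L1)
    (hf : ContDiff ℝ 2 f)
    (hsmooth : ∀ x : EuclideanSpace ℝ (Fin d),
      ‖iteratedFDeriv ℝ 2 f x‖ ≤ L0 + L1 * ‖gradient f x‖)
    (c : ℝ) (hc : 0 < c) :
    ∀ x y : EuclideanSpace ℝ (Fin d), ‖y - x‖ ≤ c / L1 →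
      f y ≤ f x + (inner ℝ (gradient f x) (y - x) : ℝ) +
        (((1 + Real.exp c - (Real.exp c - 1) / c) * L0
            + ((Real.exp c - 1) / c) * L1 * ‖gradient f x‖) / 2) * ‖y - x‖ ^ 2 := by
  intro x y hxy
  classical
  rcases eq_or_ne y x with rfl | hyx
  · simp
  set v : EuclideanSpace ℝ (Fin d) := y - x with hvdef
  set r : ℝ := ‖v‖ with hrdef
  have hr : 0 < r := norm_pos_iff.mpr (sub_ne_zero.mpr hyx)
  set F := fun z => fderiv ℝ f z with hFdef
  set δ : ℝ := ‖F x‖ with hδdef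
  set K : ℝ := L1 * r with hKdef
  set B : ℝ := (Real.exp c - 1) / c with hBdef
  set A : ℝ := 1 + Real.exp c - (Real.exp c - 1) / c with hAdef
  have hK : 0 < K := mul_pos hL1 hr
  have hKc : K ≤ c := by
    have := (mul_le_mul_of_nonneg_left hxy hL1.le)
    rwa [mul_div_cancel₀ _ hL1.ne'] at this
  -- gradient facts
  have hgradnorm : ‖gradient f x‖ = δ := by
    rw [gradient, hδdef, hFdef]
    exact LinearIsometryEquiv.norm_map _ _
  have hinner : (inner ℝ (gradient f x) v : ℝ) = F x v := by
    rw [gradient]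
    exact InnerProductSpace.toDual_symm_apply
  have hδ0 : 0 ≤ δ := norm_nonneg _
  -- differentiability facts
  have hfdiff : Differentiable ℝ f := hf.differentiable (by norm_num)
  have hF1 : ContDiff ℝ 1 F := hf.fderiv_right (by norm_num)
  have hFdiff : Differentiable ℝ F := hF1.differentiable one_ne_zero
  set γ : ℝ → EuclideanSpace ℝ (Fin d) := fun t => x + t • v with hγdef
  have hγ0 : γ 0 = x := by simp [hγdef]
  have hγ1 : γ 1 = y := by simp [hγdef, hvdef]
  have hγcont : Continuous γ := by
    apply continuous_const.add (continuous_id.smul continuous_const)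
  have hγder : ∀ t : ℝ, HasDerivAt γ v t := by
    intro t
    have := ((hasDerivAt_id t).smul_const v).const_add x
    simpa [hγdef] using this
  have hFγder : ∀ t : ℝ, HasDerivAt (fun s => F (γ s)) ((fderiv ℝ F (γ t)) v) t :=
    fun t => ((hFdiff (γ t)).hasFDerivAt).comp_hasDerivAt t (hγder t)
  have hfγder : ∀ t : ℝ, HasDerivAt (fun s => f (γ s)) (F (γ t) v) t :=
    fun t => ((hfdiff (γ t)).hasFDerivAt).comp_hasDerivAt t (hγder t)
  have hFγcont : Continuous fun t => F (γ t) := (hF1.continuous).comp hγcont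
  have hF'cont : Continuous fun t => (fderiv ℝ F (γ t)) v := by
    have h1 : Continuous fun t => fderiv ℝ F (γ t) :=
      (hF1.continuous_fderiv one_ne_zero).comp hγcont
    exact (ContinuousLinearMap.apply ℝ _ v).continuous.comp h1
  -- Hessian operator norm bound
  have hessbound : ∀ z : EuclideanSpace ℝ (Fin d), ‖fderiv ℝ F z‖ ≤ L0 + L1 * ‖F z‖ := by
    intro z
    have hFz : ‖gradient f z‖ = ‖F z‖ := by
      rw [gradient, hFdef]; exact LinearIsometryEquiv.norm_map _ _
    have h2 := hsmooth z
    rw [hFz] at h2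
    have hpos : 0 ≤ L0 + L1 * ‖F z‖ := by positivity
    refine ContinuousLinearMap.opNorm_le_bound _ hpos fun u => ?_
    refine ContinuousLinearMap.opNorm_le_bound _ (by positivity) fun w => ?_
    have heq : (fderiv ℝ F z) u w = iteratedFDeriv ℝ 2 f z ![u, w] := by
      rw [iteratedFDeriv_two_apply]
      simp [hFdef]
    rw [heq]
    calc ‖iteratedFDeriv ℝ 2 f z ![u, w]‖
        ≤ ‖iteratedFDeriv ℝ 2 f z‖ * (‖u‖ * ‖w‖) := by
          have := (iteratedFDeriv ℝ 2 f z).le_opNorm ![u, w]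
          simpa [Fin.prod_univ_two, mul_assoc] using this
      _ ≤ (L0 + L1 * ‖F z‖) * (‖u‖ * ‖w‖) := by
          apply mul_le_mul_of_nonneg_right h2 (by positivity)
      _ = (L0 + L1 * ‖F z‖) * ‖u‖ * ‖w‖ := by ring
  -- Grönwall bound on ‖F (γ t)‖
  have gron : ∀ t ∈ Set.Icc (0:ℝ) 1,
      ‖F (γ t)‖ ≤ δ * Real.exp (K * t) + L0 / L1 * (Real.exp (K * t) - 1) := by
    have bound : ∀ s ∈ Set.Ico (0:ℝ) 1,
        ‖(fderiv ℝ F (γ s)) v‖ ≤ K * ‖F (γ s)‖ + L0 * r := by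
      intro s _
      calc ‖(fderiv ℝ F (γ s)) v‖ ≤ ‖fderiv ℝ F (γ s)‖ * r :=
            (fderiv ℝ F (γ s)).le_opNorm v
        _ ≤ (L0 + L1 * ‖F (γ s)‖) * r :=
            mul_le_mul_of_nonneg_right (hessbound _) hr.le
        _ = K * ‖F (γ s)‖ + L0 * r := by rw [hKdef]; ring
    have h := norm_le_gronwallBound_of_norm_deriv_right_le
      (f := fun t => F (γ t)) (f' := fun t => (fderiv ℝ F (γ t)) v)
      (δ := δ) (K := K) (ε := L0 * r) (a := 0) (b := 1)
      (hFγcont.continuousOn)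
      (fun s _ => (hFγder s).hasDerivWithinAt)
      (by show ‖F (γ 0)‖ ≤ δ; rw [hγ0])
      bound
    intro t ht
    have h2 := h t ht
    rw [gronwallBound_of_K_ne_0 hK.ne', sub_zero] at h2
    have : L0 * r / K = L0 / L1 := by
      rw [hKdef]; field_simp
    rwa [this] at h2
  -- pointwise derivative bound
  have hexp_bound : ∀ s ∈ Set.Icc (0:ℝ) 1,
      ‖(fderiv ℝ F (γ s)) v‖ ≤ r * (L0 + L1 * δ) * Real.exp (K * s) := by
    intro s hs
    have h1 := gron s hs
    have hexp : 0 < Real.exp (K * s) := Real.exp_pos _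
    calc ‖(fderiv ℝ F (γ s)) v‖ ≤ ‖fderiv ℝ F (γ s)‖ * r :=
          (fderiv ℝ F (γ s)).le_opNorm v
      _ ≤ (L0 + L1 * ‖F (γ s)‖) * r :=
          mul_le_mul_of_nonneg_right (hessbound _) hr.le
      _ ≤ (L0 + L1 * (δ * Real.exp (K * s) + L0 / L1 * (Real.exp (K * s) - 1))) * r := by
          have : L1 * ‖F (γ s)‖ ≤ L1 * (δ * Real.exp (K * s) + L0 / L1 * (Real.exp (K * s) - 1)) :=
            mul_le_mul_of_nonneg_left h1 hL1.le
          nlinarith [hr.le]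
      _ = r * (L0 + L1 * δ) * Real.exp (K * s) := by
          field_simp
          ring
  -- FTC bound on ‖F (γ t) - F x‖
  have hFdiffbound : ∀ t ∈ Set.Icc (0:ℝ) 1,
      ‖F (γ t) - F x‖ ≤ r * (L0 + L1 * δ) * B * t := by
    intro t ht
    have hftc : ∫ s in (0:ℝ)..t, (fderiv ℝ F (γ s)) v = F (γ t) - F x := by
      rw [← hγ0]
      exact intervalIntegral.integral_eq_sub_of_hasDerivAt
        (fun s _ => hFγder s) (hF'cont.intervalIntegrable _ _)
    rw [← hftc]
    calc ‖∫ s in (0:ℝ)..t, (fderiv ℝ F (γ s)) v‖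
        ≤ ∫ s in (0:ℝ)..t, ‖(fderiv ℝ F (γ s)) v‖ :=
          intervalIntegral.norm_integral_le_integral_norm ht.1
      _ ≤ ∫ s in (0:ℝ)..t, r * (L0 + L1 * δ) * Real.exp (K * s) := by
          apply intervalIntegral.integral_mono_on ht.1
            (hF'cont.norm.intervalIntegrable _ _)
            ((continuous_const.mul (Real.continuous_exp.comp
              (continuous_const.mul continuous_id))).intervalIntegrable _ _)
          intro s hs
          exact hexp_bound s ⟨hs.1, hs.2.trans ht.2⟩
      _ = r * (L0 + L1 * δ) * ((Real.exp (K * t) - 1) / K) := by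
          rw [intervalIntegral.integral_const_mul, aux_integral_exp_mul hK.ne' t]
      _ ≤ r * (L0 + L1 * δ) * (B * t) := by
          apply mul_le_mul_of_nonneg_left _ (by positivity)
          have hKt0 : 0 ≤ K * t := mul_nonneg hK.le ht.1
          have hKtc : K * t ≤ c := by
            calc K * t ≤ K * 1 := mul_le_mul_of_nonneg_left ht.2 hK.le
              _ = K := mul_one K
              _ ≤ c := hKc
          have := aux_chord hc hKt0 hKtc
          rw [div_le_iff₀ hK]
          calc Real.exp (K * t) - 1 ≤ K * t * ((Real.exp c - 1) / c) := this
            _ = B * t * K := by rw [hBdef]; ring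
      _ = r * (L0 + L1 * δ) * B * t := by ring
  -- FTC for f along the segment
  have hftc2 : f y - f x = ∫ t in (0:ℝ)..1, F (γ t) v := by
    rw [← hγ0, ← hγ1]
    exact (intervalIntegral.integral_eq_sub_of_hasDerivAt
      (fun t _ => hfγder t)
      (((ContinuousLinearMap.apply ℝ ℝ v).continuous.comp hFγcont).intervalIntegrable _ _)).symm
  have hconst : ∫ _ in (0:ℝ)..1, F x v = F x v := by simp
  have hFγvint : IntervalIntegrable (fun t => F (γ t) v) MeasureTheory.volume 0 1 :=
    ((ContinuousLinearMap.apply ℝ ℝ v).continuous.comp hFγcont).intervalIntegrable _ _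
  have hsplit : f y - f x - F x v = ∫ t in (0:ℝ)..1, (F (γ t) v - F x v) := by
    rw [intervalIntegral.integral_sub hFγvint (continuous_const.intervalIntegrable _ _),
      hconst, hftc2]
  have hmain : f y - f x - F x v ≤ r ^ 2 * (L0 + L1 * δ) * B / 2 := by
    rw [hsplit]
    calc ∫ t in (0:ℝ)..1, (F (γ t) v - F x v)
        ≤ ∫ t in (0:ℝ)..1, r * (L0 + L1 * δ) * B * t * r := by
          apply intervalIntegral.integral_mono_on zero_le_one
            (hFγvint.sub (continuous_const.intervalIntegrable _ _))
            ((((continuous_const.mul continuous_id).mul continuous_const : Continuous fun t : ℝ => r * (L0 + L1 * δ) * B * t * r)).intervalIntegrable _ _)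
          intro t ht
          have h1 : F (γ t) v - F x v = (F (γ t) - F x) v := by simp
          rw [h1]
          calc (F (γ t) - F x) v ≤ ‖(F (γ t) - F x) v‖ := le_abs_self _
            _ ≤ ‖F (γ t) - F x‖ * r := (F (γ t) - F x).le_opNorm v
            _ ≤ r * (L0 + L1 * δ) * B * t * r :=
                mul_le_mul_of_nonneg_right (hFdiffbound t ht) hr.le
      _ = r ^ 2 * (L0 + L1 * δ) * B / 2 := by
          have : (fun t : ℝ => r * (L0 + L1 * δ) * B * t * r)
              = fun t : ℝ => (r * (L0 + L1 * δ) * B * r) * t := by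
            funext t; ring
          rw [this, intervalIntegral.integral_const_mul, integral_id]
          ring
  -- conclude
  have hBA : B ≤ A := aux_B_le_A hc
  have hB0 : 0 < B := by
    rw [hBdef]
    have h1 : (1:ℝ) < Real.exp c := by
      rw [← Real.exp_zero]; exact Real.exp_lt_exp.mpr hc
    have : 0 < Real.exp c - 1 := by linarith
    positivity
  have hfinal : r ^ 2 * (L0 + L1 * δ) * B / 2 ≤ (A * L0 + B * L1 * δ) / 2 * r ^ 2 := by
    have h1 : (L0 + L1 * δ) * B ≤ A * L0 + B * L1 * δ := by
      nlinarith [mul_le_mul_of_nonneg_right hBA hL0.le]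
    have h2 := mul_le_mul_of_nonneg_left h1 (by positivity : (0:ℝ) ≤ r ^ 2 / 2)
    nlinarith [h2]
  rw [hinner, hgradnorm]
  calc f y = f x + F x v + (f y - f x - F x v) := by ring
    _ ≤ f x + F x v + r ^ 2 * (L0 + L1 * δ) * B / 2 := by linarith
    _ ≤ f x + F x v + (A * L0 + B * L1 * δ) / 2 * r ^ 2 := by linarith
end

section
/- Let d ≥ 1 be an integer, f⋆ ∈ ℝ, K ≥ 1 an integer, and let A, B, L0, L1 > 0 satisfy √2 B L1 < 1. Let θ : ℕ → ℝ, g : ℕ → ℝ, and δ : ℕ → ℝ be sequences such that for all k: θ_k ≥ f⋆, 0 ≤ g_k ≤ A L0/(1 − √2 B L1), |δ_k| ≤ g_k/(2 (A L0 + √2 B L1 g_k) d), and for all k < K, θ_{k+1} ≤ θ_k − g_k²/(4 (A L0 + √2 B L1 g_k) d) + ((A L0 + √2 B L1 g_k) d/2) δ_k². Then there exists j with 0 ≤ j < K such that g_j² ≤ 8 A L0 d (θ_0 − f⋆)/((1 − √2 B L1) K). -/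
/-- Theorem 3.5, Option 4, Condition 2 of Table 1:
the case `√2 B L1 < 1` and `g_k ≤ A L0/(1 − √2 B L1)`. -/
theorem stmt16 (d : ℕ) (hd : 1 ≤ d) (fstar : ℝ) (K : ℕ) (hK : 1 ≤ K)
    (A B L0 L1 : ℝ) (hA : 0 < A) (hB : 0 < B) (hL0 : 0 < L0) (hL1 : 0 < L1)
    (hsmall : Real.sqrt 2 * B * L1 < 1)
    (θ g δ : ℕ → ℝ)
    (hθ : ∀ k, fstar ≤ θ k)
    (hg0 : ∀ k, 0 ≤ g k)
    (hg1 : ∀ k, g k ≤ A * L0 / (1 - Real.sqrt 2 * B * L1))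
    (hδ : ∀ k, |δ k| ≤ g k / (2 * (A * L0 + Real.sqrt 2 * B * L1 * g k) * d))
    (hstep : ∀ k < K,
      θ (k + 1) ≤ θ k - (g k) ^ 2 / (4 * (A * L0 + Real.sqrt 2 * B * L1 * g k) * d)
        + ((A * L0 + Real.sqrt 2 * B * L1 * g k) * d / 2) * (δ k) ^ 2) :
    ∃ j < K, (g j) ^ 2 ≤ 8 * A * L0 * d * (θ 0 - fstar) / ((1 - Real.sqrt 2 * B * L1) * K) := by
  set s : ℝ := Real.sqrt 2 * B * L1 with hs_def
  have hs0 : 0 < s := by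
    have h2 : (0:ℝ) < Real.sqrt 2 := Real.sqrt_pos.mpr (by norm_num)
    positivity
  have hs1 : 0 < 1 - s := by linarith
  have hdpos : (0:ℝ) < (d:ℝ) := by exact_mod_cast Nat.lt_of_lt_of_le Nat.zero_lt_one hd
  have hKpos : (0:ℝ) < (K:ℝ) := by exact_mod_cast Nat.lt_of_lt_of_le Nat.zero_lt_one hK
  -- per-step decrease
  have key : ∀ k < K, (1 - s) / (8 * A * L0 * d) * (g k) ^ 2 ≤ θ k - θ (k + 1) := by
    intro k hk
    have hgk := hg0 k
    have hc0 : 0 < A * L0 + s * g k := by positivity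
    have hc : 0 < (A * L0 + s * g k) * d := by positivity
    -- δ² bound
    have hδ2 : (δ k) ^ 2 ≤ (g k) ^ 2 / (2 * (A * L0 + s * g k) * d) ^ 2 := by
      have h := hδ k
      have habs : |δ k| ^ 2 ≤ (g k / (2 * (A * L0 + s * g k) * d)) ^ 2 := by
        apply pow_le_pow_left₀ (abs_nonneg _) h
      rw [sq_abs] at habs
      calc (δ k) ^ 2 ≤ (g k / (2 * (A * L0 + s * g k) * d)) ^ 2 := habs
        _ = (g k) ^ 2 / (2 * (A * L0 + s * g k) * d) ^ 2 := by rw [div_pow]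
    have hstep' := hstep k hk
    have hterm : ((A * L0 + s * g k) * d / 2) * (δ k) ^ 2
        ≤ (g k) ^ 2 / (8 * ((A * L0 + s * g k) * d)) := by
      have h1 : ((A * L0 + s * g k) * d / 2) * (δ k) ^ 2
          ≤ ((A * L0 + s * g k) * d / 2) * ((g k) ^ 2 / (2 * (A * L0 + s * g k) * d) ^ 2) :=
        mul_le_mul_of_nonneg_left hδ2 (by positivity)
      have h2 : ((A * L0 + s * g k) * d / 2) * ((g k) ^ 2 / (2 * (A * L0 + s * g k) * d) ^ 2)
          = (g k) ^ 2 / (8 * ((A * L0 + s * g k) * d)) := by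
        field_simp
        ring
      linarith
    have hdec : θ (k + 1) ≤ θ k - (g k) ^ 2 / (8 * ((A * L0 + s * g k) * d)) := by
      have : (g k) ^ 2 / (4 * (A * L0 + s * g k) * d)
          = 2 * ((g k) ^ 2 / (8 * ((A * L0 + s * g k) * d))) := by
        field_simp; ring
      linarith
    -- compare denominators: (A L0 + s g) d ≤ A L0 d / (1-s)
    have hcbound : (A * L0 + s * g k) * d ≤ A * L0 * d / (1 - s) := by
      have h1 : s * g k ≤ s * (A * L0 / (1 - s)) :=
        mul_le_mul_of_nonneg_left (hg1 k) hs0.le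
      have h2 : A * L0 + s * (A * L0 / (1 - s)) = A * L0 / (1 - s) := by
        field_simp; ring
      have h3 : A * L0 + s * g k ≤ A * L0 / (1 - s) := by linarith
      calc (A * L0 + s * g k) * d ≤ (A * L0 / (1 - s)) * d :=
            mul_le_mul_of_nonneg_right h3 hdpos.le
        _ = A * L0 * d / (1 - s) := by ring
    have hfrac : (1 - s) / (8 * A * L0 * d) * (g k) ^ 2
        ≤ (g k) ^ 2 / (8 * ((A * L0 + s * g k) * d)) := by
      have hrw : (1 - s) / (8 * A * L0 * d) * (g k) ^ 2
          = (g k) ^ 2 / (8 * A * L0 * d / (1 - s)) := by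
        field_simp
      rw [hrw]
      apply div_le_div_of_nonneg_left (by positivity) (by positivity)
      calc 8 * ((A * L0 + s * g k) * d) ≤ 8 * (A * L0 * d / (1 - s)) := by linarith
        _ = 8 * A * L0 * d / (1 - s) := by ring
    linarith
  -- telescoping
  have tele : ∀ n ≤ K, ∑ k ∈ Finset.range n, (1 - s) / (8 * A * L0 * d) * (g k) ^ 2
      ≤ θ 0 - θ n := by
    intro n hn
    induction n with
    | zero => simp
    | succ m ih =>
      rw [Finset.sum_range_succ]
      have h1 := ih (Nat.le_of_succ_le hn)
      have h2 := key m (Nat.lt_of_succ_le hn)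
      linarith
  have hsum := tele K le_rfl
  have hsum' : ∑ k ∈ Finset.range K, (1 - s) / (8 * A * L0 * d) * (g k) ^ 2
      ≤ θ 0 - fstar := le_trans hsum (by linarith [hθ K])
  by_contra hcon
  push_neg at hcon
  set C : ℝ := 8 * A * L0 * d * (θ 0 - fstar) / ((1 - s) * K) with hC
  have hlt : (K : ℝ) * ((1 - s) / (8 * A * L0 * d) * C)
      < ∑ k ∈ Finset.range K, (1 - s) / (8 * A * L0 * d) * (g k) ^ 2 := by
    have := Finset.sum_lt_sum_of_nonempty (s := Finset.range K)
      (by simp [Nat.pos_of_ne_zero]; omega)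
      (f := fun _ => (1 - s) / (8 * A * L0 * d) * C)
      (g := fun k => (1 - s) / (8 * A * L0 * d) * (g k) ^ 2)
      (fun i hi => by
        have := hcon i (Finset.mem_range.mp hi)
        exact mul_lt_mul_of_pos_left this (by positivity))
    simpa [Finset.sum_const, Finset.card_range, nsmul_eq_mul] using this
  have heq : (K : ℝ) * ((1 - s) / (8 * A * L0 * d) * C) = θ 0 - fstar := by
    rw [hC]
    field_simp
  linarith
end

section
/- Let d ≥ 1 be an integer, f⋆ ∈ ℝ, K ≥ 1 an integer, and let A, B, L0, L1 > 0 satisfy √2 B L1 > 1. Let θ : ℕ → ℝ, g : ℕ → ℝ, and δ : ℕ → ℝ be sequences such that for all k: θ_k ≥ f⋆, 0 ≤ g_k ≤ A L0/(√2 B L1 − 1), |δ_k| ≤ g_k/(2 (A L0 + √2 B L1 g_k) d), and for all k < K, θ_{k+1} ≤ θ_k − g_k²/(4 (A L0 + √2 B L1 g_k) d) + ((A L0 + √2 B L1 g_k) d/2) δ_k². Then there exists j with 0 ≤ j < K such that g_j² ≤ 8 A L0 d (θ_0 − f⋆)(2√2 B L1 − 1)/((√2 B L1 − 1) K). -/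
set_option maxHeartbeats 800000


/-- Theorem 3.5, Option 4, Condition 3 of Table 1:
the case `√2 B L1 > 1` and `g_k ≤ A L0/(√2 B L1 − 1)`. -/
theorem stmt17 (d : ℕ) (hd : 1 ≤ d) (fstar : ℝ) (K : ℕ) (hK : 1 ≤ K)
    (A B L0 L1 : ℝ) (hA : 0 < A) (hB : 0 < B) (hL0 : 0 < L0) (hL1 : 0 < L1)
    (hbig : 1 < Real.sqrt 2 * B * L1)
    (θ g δ : ℕ → ℝ)
    (hθ : ∀ k, fstar ≤ θ k)
    (hg0 : ∀ k, 0 ≤ g k)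
    (hg1 : ∀ k, g k ≤ A * L0 / (Real.sqrt 2 * B * L1 - 1))
    (hδ : ∀ k, |δ k| ≤ g k / (2 * (A * L0 + Real.sqrt 2 * B * L1 * g k) * d))
    (hstep : ∀ k < K,
      θ (k + 1) ≤ θ k - (g k) ^ 2 / (4 * (A * L0 + Real.sqrt 2 * B * L1 * g k) * d)
        + ((A * L0 + Real.sqrt 2 * B * L1 * g k) * d / 2) * (δ k) ^ 2) :
    ∃ j < K, (g j) ^ 2
      ≤ 8 * A * L0 * d * (θ 0 - fstar) * (2 * Real.sqrt 2 * B * L1 - 1)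
          / ((Real.sqrt 2 * B * L1 - 1) * K) := by
  by_contra hcon
  push_neg at hcon
  set c : ℝ := Real.sqrt 2 * B * L1 with hc
  have hc1 : 1 < c := hbig
  have hdpos : (0 : ℝ) < d := by exact_mod_cast Nat.lt_of_lt_of_le Nat.zero_lt_one hd
  have hKpos : (0 : ℝ) < K := by exact_mod_cast hK
  have ht : 0 ≤ θ 0 - fstar := by linarith [hθ 0]
  set t : ℝ := θ 0 - fstar with htdef
  have hD : ∀ k, 0 < A * L0 + c * g k := by
    intro k
    have := hg0 k
    nlinarith [mul_pos hA hL0]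
  set Q : ℝ := t / K with hQ
  have key : ∀ k < K, θ (k + 1) < θ k - Q := by
    intro k hk
    have hDk := hD k
    have hgk := hg0 k
    have hgk1 : g k * (c - 1) ≤ A * L0 := by
      have h1 := hg1 k
      rw [le_div_iff₀ (by linarith : (0:ℝ) < c - 1)] at h1
      exact h1
    -- delta bound
    have hδk := hδ k
    have hδ2 : (δ k) ^ 2 ≤ (g k / (2 * (A * L0 + c * g k) * d)) ^ 2 := by
      have h0 : 0 ≤ |δ k| := abs_nonneg _
      have := sq_abs (δ k)
      nlinarith
    have hden : 2 * (A * L0 + c * g k) * d ≠ 0 := by positivity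
    have hnoise : ((A * L0 + c * g k) * d / 2) * (δ k) ^ 2
        ≤ g k ^ 2 / (8 * (A * L0 + c * g k) * d) := by
      have heq : ((A * L0 + c * g k) * d / 2) * (g k / (2 * (A * L0 + c * g k) * d)) ^ 2
          = g k ^ 2 / (8 * (A * L0 + c * g k) * d) := by
        field_simp
        ring
      calc ((A * L0 + c * g k) * d / 2) * (δ k) ^ 2
          ≤ ((A * L0 + c * g k) * d / 2) * (g k / (2 * (A * L0 + c * g k) * d)) ^ 2 := by
            apply mul_le_mul_of_nonneg_left hδ2; positivity
        _ = g k ^ 2 / (8 * (A * L0 + c * g k) * d) := heq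
    have hstepk := hstep k hk
    have hhalf : g k ^ 2 / (4 * (A * L0 + c * g k) * d)
        - g k ^ 2 / (8 * (A * L0 + c * g k) * d)
        = g k ^ 2 / (8 * (A * L0 + c * g k) * d) := by
      field_simp
      ring
    have hub : θ (k + 1) ≤ θ k - g k ^ 2 / (8 * (A * L0 + c * g k) * d) := by
      linarith
    -- now prove Q < g k ^2 / (8 * D * d)
    have hC := hcon k hk
    have h2c : 2 * Real.sqrt 2 * B * L1 = 2 * c := by rw [hc]; ring
    rw [h2c] at hC
    have hC' : 8 * A * L0 * d * t * (2 * c - 1) < g k ^ 2 * ((c - 1) * K) := by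
      rwa [div_lt_iff₀ (by nlinarith)] at hC
    have hmid : (A * L0 + c * g k) * (c - 1) ≤ A * L0 * (2 * c - 1) := by
      nlinarith [hgk1, hc1]
    have hmid2 : 8 * (d:ℝ) * t * ((A * L0 + c * g k) * (c - 1))
        ≤ 8 * (d:ℝ) * t * (A * L0 * (2 * c - 1)) :=
      mul_le_mul_of_nonneg_left hmid (by positivity)
    have hlt : Q < g k ^ 2 / (8 * (A * L0 + c * g k) * d) := by
      rw [hQ, div_lt_div_iff₀ hKpos (by positivity)]
      nlinarith [hC', hmid2, hc1]
    linarith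
  have main : ∀ n, n ≤ K → 1 ≤ n → θ n < θ 0 - n * Q := by
    intro n
    induction n with
    | zero => intro _ h; omega
    | succ m ih =>
      intro hle _
      rcases Nat.eq_zero_or_pos m with hm | hm
      · subst hm
        have := key 0 (by omega)
        push_cast
        linarith
      · have h1 := ih (by omega) hm
        have h2 := key m (by omega)
        push_cast
        push_cast at h1
        linarith
  have hfin := main K le_rfl hK
  have hKQ : (K : ℝ) * Q = t := by
    rw [hQ]
    field_simp
  have := hθ K
  rw [hKQ, htdef] at hfin
  linarith
end

section
/- Let d ≥ 1 be an integer, K ≥ 1 an integer, and let A, B, L0, L1 > 0 satisfy √2 B L1 > 1. Let θ : ℕ → ℝ, g : ℕ → ℝ, and δ : ℕ → ℝ be sequences such that for all k: g_k ≥ A L0/(√2 B L1 − 1), |δ_k| ≤ g_k/(2 (A L0 + √2 B L1 g_k) d), and for all k < K, θ_{k+1} ≤ θ_k − g_k²/(4 (A L0 + √2 B L1 g_k) d) + ((A L0 + √2 B L1 g_k) d/2) δ_k². Then θ_K ≤ θ_0 − K · A L0/(8 (2√2 B L1 − 1)(√2 B L1 − 1) d). -/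
/-- Theorem 3.5, Option 4, Condition 4 of Table 1:
the case `√2 B L1 > 1` and `g_k ≥ A L0/(√2 B L1 − 1)`: the objective value
decreases by a fixed amount per iteration. -/
theorem stmt18 (d : ℕ) (hd : 1 ≤ d) (K : ℕ) (hK : 1 ≤ K)
    (A B L0 L1 : ℝ) (hA : 0 < A) (hB : 0 < B) (hL0 : 0 < L0) (hL1 : 0 < L1)
    (hbig : 1 < Real.sqrt 2 * B * L1)
    (θ g δ : ℕ → ℝ)
    (hg : ∀ k, A * L0 / (Real.sqrt 2 * B * L1 - 1) ≤ g k)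
    (hδ : ∀ k, |δ k| ≤ g k / (2 * (A * L0 + Real.sqrt 2 * B * L1 * g k) * d))
    (hstep : ∀ k < K,
      θ (k + 1) ≤ θ k - (g k) ^ 2 / (4 * (A * L0 + Real.sqrt 2 * B * L1 * g k) * d)
        + ((A * L0 + Real.sqrt 2 * B * L1 * g k) * d / 2) * (δ k) ^ 2) :
    θ K ≤ θ 0 - K * (A * L0
        / (8 * (2 * Real.sqrt 2 * B * L1 - 1) * (Real.sqrt 2 * B * L1 - 1) * d)) := by
  set s := Real.sqrt 2 * B * L1 with hsdef
  have hs1 : 1 < s := hbig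
  have hAL0 : 0 < A * L0 := mul_pos hA hL0
  have hdR : (1:ℝ) ≤ (d:ℝ) := by exact_mod_cast hd
  have hd0 : (0:ℝ) < (d:ℝ) := by linarith
  set c := A * L0 / (8 * (2 * s - 1) * (s - 1) * (d:ℝ)) with hcdef
  have hstep' : ∀ k < K, θ (k + 1) ≤ θ k - c := by
    intro k hk
    have hgk : A * L0 / (s - 1) ≤ g k := hg k
    have hgpos : 0 < g k := lt_of_lt_of_le (div_pos hAL0 (by linarith)) hgk
    set C := A * L0 + s * g k with hCdef
    have hC : 0 < C := by
      have : 0 < s * g k := mul_pos (by linarith) hgpos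
      positivity
    have hAle : A * L0 ≤ (s - 1) * g k := by
      rw [div_le_iff₀ (by linarith : (0:ℝ) < s - 1)] at hgk
      linarith [hgk]
    -- bound the noise term
    have hnoise : (C * (d:ℝ) / 2) * (δ k) ^ 2 ≤ (g k) ^ 2 / (8 * C * (d:ℝ)) := by
      have hb : |δ k| ≤ g k / (2 * C * (d:ℝ)) := hδ k
      have hsq : (δ k) ^ 2 ≤ (g k / (2 * C * (d:ℝ))) ^ 2 := by
        have := pow_le_pow_left₀ (abs_nonneg (δ k)) hb 2
        simpa [sq_abs] using this
      have h1 : (C * (d:ℝ) / 2) * (δ k) ^ 2 ≤ (C * (d:ℝ) / 2) * (g k / (2 * C * (d:ℝ))) ^ 2 :=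
        mul_le_mul_of_nonneg_left hsq (by positivity)
      have h2 : (C * (d:ℝ) / 2) * (g k / (2 * C * (d:ℝ))) ^ 2 = (g k) ^ 2 / (8 * C * (d:ℝ)) := by
        field_simp
        ring
      linarith [h1, h2.le]
    -- bound the decrease term
    have hdec : c ≤ (g k) ^ 2 / (8 * C * (d:ℝ)) := by
      have hCle : C ≤ (2 * s - 1) * g k := by rw [hCdef]; nlinarith
      rw [hcdef, div_le_div_iff₀ (by
        exact mul_pos (mul_pos (mul_pos (by norm_num : (0:ℝ) < 8)
          (by linarith : (0:ℝ) < 2 * s - 1)) (by linarith : (0:ℝ) < s - 1)) hd0) (by positivity)]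
      nlinarith [mul_le_mul hAle hCle hC.le (by nlinarith : (0:ℝ) ≤ (s - 1) * g k), hd0, hdR]
    have h0 := hstep k hk
    have hsplit : (g k) ^ 2 / (4 * C * (d:ℝ)) = 2 * ((g k) ^ 2 / (8 * C * (d:ℝ))) := by
      field_simp; ring
    calc θ (k + 1) ≤ θ k - (g k) ^ 2 / (4 * C * (d:ℝ)) + (C * (d:ℝ) / 2) * (δ k) ^ 2 := h0
      _ ≤ θ k - (g k) ^ 2 / (8 * C * (d:ℝ)) := by rw [hsplit] at *; linarith
      _ ≤ θ k - c := by linarith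
  have main : ∀ n ≤ K, θ n ≤ θ 0 - (n:ℝ) * c := by
    intro n hn
    induction n with
    | zero => simp
    | succ m ih =>
      have hm : m < K := lt_of_lt_of_le (Nat.lt_succ_self m) hn
      have h1 := hstep' m hm
      have h2 := ih (le_of_lt hm)
      push_cast
      linarith
  have hfin : (2 * Real.sqrt 2 * B * L1 - 1) = 2 * s - 1 := by rw [hsdef]; ring
  rw [hfin]
  exact main K le_rfl
end
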